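/- (Hanging Gardens, existence) Let G = (V,E) be a finite bipartite (boson/fermion) connected graph, S ⊆ V a nonempty subset, and h : S → ℤ a function that is even on bosons in S, odd on fermions in S, and satisfies dist(s_1, s_2) > |h(s_1) − h(s_2)| for all distinct s_1, s_2 ∈ S. Define hgt(v) := max over s ∈ S of (h(s) − dist(v,s)). Then hgt is a height assignment for the orientation of G in which each edge {v,w} is directed from the vertex of smaller hgt to the vertex of larger hgt (these differ by exactly 1), and hgt extends h, i.e., hgt(s) = h(s) for all s ∈ S. -/

import Mathlib

/-- Hanging Gardens, existence.  Given a finite connected bipartite graph,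
a nonempty set `S` of prospective targets, and heights `h` on `S` of the right parity with
`dist s₁ s₂ > |h s₁ − h s₂|`, the function `hgt v = max_{s∈S} (h s − dist v s)` extends `h`
and is a height assignment: the heights of adjacent vertices differ by exactly one (so each
edge may be directed from its lower to its higher endpoint). -/
theorem stmt8 {V : Type*} [Fintype V] [DecidableEq V]
    (G : SimpleGraph V) (hconn : G.Connected)
    (boson : V → Bool) (hbip : ∀ v w : V, G.Adj v w → boson v ≠ boson w)
    (S : Finset V) (hS : S.Nonempty) (h : V → ℤ)
    (hpar : ∀ s ∈ S, (boson s = true → Even (h s)) ∧ (boson s = false → Odd (h s)))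
    (hdist : ∀ s₁ ∈ S, ∀ s₂ ∈ S, s₁ ≠ s₂ → |h s₁ - h s₂| < (G.dist s₁ s₂ : ℤ))
    (hgt : V → ℤ)
    (hdef : ∀ v, hgt v = S.sup' hS (fun s => h s - (G.dist v s : ℤ))) :
    (∀ s ∈ S, hgt s = h s) ∧
    (∀ v w : V, G.Adj v w → hgt v = hgt w + 1 ∨ hgt w = hgt v + 1) := by
  -- parity of walks
  have hwalk : ∀ (v w : V) (p : G.Walk v w), (Even p.length ↔ boson v = boson w) := by
    intro v w p
    induction p with
    | nil => simp
    | @cons a b c hab p ih =>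
      have hne := hbip _ _ hab
      rw [SimpleGraph.Walk.length_cons, Nat.even_add_one, ih]
      cases hb : boson a <;> cases hc : boson b <;> cases hd : boson c <;> simp_all
  have hdistpar : ∀ v w : V, (Even (G.dist v w) ↔ boson v = boson w) := by
    intro v w
    obtain ⟨p, hp⟩ := hconn.exists_walk_length_eq_dist v w
    rw [← hp]; exact hwalk v w p
  have hkey1 : ∀ v : V, boson v = true → hgt v % 2 = 0 := by
    intro v hb
    obtain ⟨s, hsS, hs⟩ := Finset.exists_mem_eq_sup' hS (fun s => h s - (G.dist v s : ℤ))
    rw [hdef v, hs]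
    have hd := hdistpar v s
    rw [hb] at hd
    cases hc : boson s
    · rw [hc] at hd; simp only [Bool.true_eq_false, iff_false] at hd
      rw [Nat.not_even_iff] at hd
      have hp := (hpar s hsS).2 hc
      rw [Int.odd_iff] at hp
      omega
    · rw [hc] at hd; simp only [iff_true] at hd
      rw [Nat.even_iff] at hd
      have hp := (hpar s hsS).1 hc
      rw [Int.even_iff] at hp
      omega
  have hkey0 : ∀ v : V, boson v = false → hgt v % 2 = 1 := by
    intro v hb
    obtain ⟨s, hsS, hs⟩ := Finset.exists_mem_eq_sup' hS (fun s => h s - (G.dist v s : ℤ))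
    rw [hdef v, hs]
    have hd := hdistpar v s
    rw [hb] at hd
    cases hc : boson s
    · rw [hc] at hd; simp only [iff_true] at hd
      rw [Nat.even_iff] at hd
      have hp := (hpar s hsS).2 hc
      rw [Int.odd_iff] at hp
      omega
    · rw [hc] at hd; simp only [Bool.false_eq_true, iff_false] at hd
      rw [Nat.not_even_iff] at hd
      have hp := (hpar s hsS).1 hc
      rw [Int.even_iff] at hp
      omega
  have hbound : ∀ v w : V, G.Adj v w → hgt v ≤ hgt w + 1 := by
    intro v w hvw
    rw [hdef v, hdef w]
    apply Finset.sup'_le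
    intro s hsS
    have h1 : G.dist w s ≤ G.dist v s + 1 := by
      calc G.dist w s ≤ G.dist w v + G.dist v s := hconn.dist_triangle
        _ ≤ 1 + G.dist v s := by
            have := G.dist_le (hvw.symm.toWalk)
            simp only [SimpleGraph.Walk.length_cons, SimpleGraph.Walk.length_nil] at this
            omega
        _ = G.dist v s + 1 := by omega
    have h2 : h s - (G.dist w s : ℤ) ≤ S.sup' hS (fun s => h s - (G.dist w s : ℤ)) :=
      Finset.le_sup' (fun s => h s - (G.dist w s : ℤ)) hsS
    have : ((G.dist w s : ℤ)) ≤ (G.dist v s : ℤ) + 1 := by exact_mod_cast h1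
    omega
  refine ⟨?_, ?_⟩
  · intro s hsS
    rw [hdef s]
    apply le_antisymm
    · apply Finset.sup'_le
      intro s' hs'
      by_cases he : s' = s
      · subst he; simp [SimpleGraph.dist_self]
      · have hlt := hdist s' hs' s hsS he
        have habs := abs_lt.mp hlt
        rw [SimpleGraph.dist_comm] at habs
        omega
    · have := Finset.le_sup' (fun s' => h s' - (G.dist s s' : ℤ)) hsS
      simp only [SimpleGraph.dist_self, Nat.cast_zero, sub_zero] at this; exact this
  · intro v w hvw
    have b1 := hbound v w hvw
    have b2 := hbound w v hvw.symm
    have hne := hbip v w hvw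
    cases hb : boson v <;> cases hc : boson w
    · rw [hb, hc] at hne; exact absurd rfl hne
    · have k1 := hkey0 v hb; have k2 := hkey1 w hc; omega
    · have k1 := hkey1 v hb; have k2 := hkey0 w hc; omega
    · rw [hb, hc] at hne; exact absurd rfl hne
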